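/- The Hessian I₂' = u_{xx}u_{yy} − u_{xy}² and I_{2c} = u_x²u_{yy} − 2u_xu_yu_{xy} + u_y²u_{xx} are both invariant under the prolonged action of the special affine algebra sl(2,ℝ)⋉ℝ² on functions on ℝ²: the second prolongations of x∂_y, y∂_x, x∂_x − y∂_y, ∂_x, ∂_y all annihilate I₂' and I_{2c}. -/

import Mathlib

open Matrix

noncomputable section

/-- Coordinates on `J²ℝ²`: `(x, y, u, u_x, u_y, u_xx, u_xy, u_yy)`. -/
def I2' : (Fin 8 → ℝ) → ℝ := fun p => p 5 * p 7 - (p 6) ^ 2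

def I2c : (Fin 8 → ℝ) → ℝ := fun p =>
  (p 3) ^ 2 * p 7 - 2 * p 3 * p 4 * p 6 + (p 4) ^ 2 * p 5

/-- Second prolongation of `X₁ = x∂_y`. -/
def X1prol2 : (Fin 8 → ℝ) → (Fin 8 → ℝ) := fun p =>
  ![0, p 0, 0, -(p 4), 0, -2 * p 6, -(p 7), 0]

/-- Second prolongation of `X₂ = y∂_x`. -/
def X2prol2 : (Fin 8 → ℝ) → (Fin 8 → ℝ) := fun p =>
  ![p 1, 0, 0, 0, -(p 3), 0, -(p 5), -2 * p 6]

/-- Second prolongation of `X₃ = x∂_x − y∂_y`. -/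
def X3prol2 : (Fin 8 → ℝ) → (Fin 8 → ℝ) := fun p =>
  ![p 0, -(p 1), 0, -(p 3), p 4, -2 * p 5, 0, 2 * p 7]

/-- Second prolongation of `∂_x`. -/
def X4prol2 : (Fin 8 → ℝ) → (Fin 8 → ℝ) := fun _ => ![1, 0, 0, 0, 0, 0, 0, 0]

/-- Second prolongation of `∂_y`. -/
def X5prol2 : (Fin 8 → ℝ) → (Fin 8 → ℝ) := fun _ => ![0, 1, 0, 0, 0, 0, 0, 0]

@[simp] lemma X1prol2_3 (p : Fin 8 → ℝ) : X1prol2 p 3 = -(p 4) := rfl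
@[simp] lemma X1prol2_4 (p : Fin 8 → ℝ) : X1prol2 p 4 = 0 := rfl
@[simp] lemma X1prol2_5 (p : Fin 8 → ℝ) : X1prol2 p 5 = -2 * p 6 := rfl
@[simp] lemma X1prol2_6 (p : Fin 8 → ℝ) : X1prol2 p 6 = -(p 7) := rfl
@[simp] lemma X1prol2_7 (p : Fin 8 → ℝ) : X1prol2 p 7 = 0 := rfl
@[simp] lemma X2prol2_3 (p : Fin 8 → ℝ) : X2prol2 p 3 = 0 := rfl
@[simp] lemma X2prol2_4 (p : Fin 8 → ℝ) : X2prol2 p 4 = -(p 3) := rfl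
@[simp] lemma X2prol2_5 (p : Fin 8 → ℝ) : X2prol2 p 5 = 0 := rfl
@[simp] lemma X2prol2_6 (p : Fin 8 → ℝ) : X2prol2 p 6 = -(p 5) := rfl
@[simp] lemma X2prol2_7 (p : Fin 8 → ℝ) : X2prol2 p 7 = -2 * p 6 := rfl
@[simp] lemma X3prol2_3 (p : Fin 8 → ℝ) : X3prol2 p 3 = -(p 3) := rfl
@[simp] lemma X3prol2_4 (p : Fin 8 → ℝ) : X3prol2 p 4 = p 4 := rfl
@[simp] lemma X3prol2_5 (p : Fin 8 → ℝ) : X3prol2 p 5 = -2 * p 5 := rfl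
@[simp] lemma X3prol2_6 (p : Fin 8 → ℝ) : X3prol2 p 6 = 0 := rfl
@[simp] lemma X3prol2_7 (p : Fin 8 → ℝ) : X3prol2 p 7 = 2 * p 7 := rfl
@[simp] lemma X4prol2_3 (p : Fin 8 → ℝ) : X4prol2 p 3 = 0 := rfl
@[simp] lemma X4prol2_4 (p : Fin 8 → ℝ) : X4prol2 p 4 = 0 := rfl
@[simp] lemma X4prol2_5 (p : Fin 8 → ℝ) : X4prol2 p 5 = 0 := rfl
@[simp] lemma X4prol2_6 (p : Fin 8 → ℝ) : X4prol2 p 6 = 0 := rfl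
@[simp] lemma X4prol2_7 (p : Fin 8 → ℝ) : X4prol2 p 7 = 0 := rfl
@[simp] lemma X5prol2_3 (p : Fin 8 → ℝ) : X5prol2 p 3 = 0 := rfl
@[simp] lemma X5prol2_4 (p : Fin 8 → ℝ) : X5prol2 p 4 = 0 := rfl
@[simp] lemma X5prol2_5 (p : Fin 8 → ℝ) : X5prol2 p 5 = 0 := rfl
@[simp] lemma X5prol2_6 (p : Fin 8 → ℝ) : X5prol2 p 6 = 0 := rfl
@[simp] lemma X5prol2_7 (p : Fin 8 → ℝ) : X5prol2 p 7 = 0 := rfl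

noncomputable def pr (i : Fin 8) : (Fin 8 → ℝ) →L[ℝ] ℝ := ContinuousLinearMap.proj i

lemma hpr (p : Fin 8 → ℝ) (i : Fin 8) : HasFDerivAt (fun q : Fin 8 → ℝ => q i) (pr i) p :=
  (pr i).hasFDerivAt

lemma fderiv_I2' (p v : Fin 8 → ℝ) :
    fderiv ℝ I2' p v = v 5 * p 7 + p 5 * v 7 - 2 * p 6 * v 6 := by
  have h : HasFDerivAt I2'
      (p 7 • pr 5 + p 5 • pr 7 - (2 * p 6) • pr 6) p := by
    have h1 := ((hpr p 5).mul (hpr p 7)).sub ((hpr p 6).mul (hpr p 6))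
    refine (h1.congr_of_eventuallyEq (Filter.Eventually.of_forall fun q => ?_)).congr_fderiv ?_
    · simp [I2', sq]
    · ext w; simp [pr]; ring
  rw [h.fderiv]
  simp [pr]
  ring

lemma fderiv_I2c (p v : Fin 8 → ℝ) :
    fderiv ℝ I2c p v = 2 * p 3 * p 7 * v 3 + p 3 ^ 2 * v 7
      - 2 * (v 3 * p 4 * p 6 + p 3 * v 4 * p 6 + p 3 * p 4 * v 6)
      + 2 * p 4 * p 5 * v 4 + p 4 ^ 2 * v 5 := by
  have h : HasFDerivAt I2c
      ((2 * p 3 * p 7) • pr 3 + (p 3 ^ 2) • pr 7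
        - ((2 * p 4 * p 6) • pr 3 + (2 * p 3 * p 6) • pr 4 + (2 * p 3 * p 4) • pr 6)
        + ((2 * p 4 * p 5) • pr 4 + (p 4 ^ 2) • pr 5)) p := by
    have h1 := ((((hpr p 3).mul (hpr p 3)).mul (hpr p 7)).sub
        ((((hpr p 3).mul (hpr p 4)).mul (hpr p 6)).const_mul 2)).add
        (((hpr p 4).mul (hpr p 4)).mul (hpr p 5))
    refine (h1.congr_of_eventuallyEq (Filter.Eventually.of_forall fun q => ?_)).congr_fderiv ?_
    · simp [I2c, sq]; ring
    · ext w; simp [pr]; ring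
  rw [h.fderiv]
  simp [pr]
  ring

theorem stmt_15 : ∀ p : Fin 8 → ℝ,
    (fderiv ℝ I2' p (X1prol2 p) = 0 ∧ fderiv ℝ I2c p (X1prol2 p) = 0) ∧
    (fderiv ℝ I2' p (X2prol2 p) = 0 ∧ fderiv ℝ I2c p (X2prol2 p) = 0) ∧
    (fderiv ℝ I2' p (X3prol2 p) = 0 ∧ fderiv ℝ I2c p (X3prol2 p) = 0) ∧
    (fderiv ℝ I2' p (X4prol2 p) = 0 ∧ fderiv ℝ I2c p (X4prol2 p) = 0) ∧
    (fderiv ℝ I2' p (X5prol2 p) = 0 ∧ fderiv ℝ I2c p (X5prol2 p) = 0) := by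
  intro p
  refine ⟨⟨?_, ?_⟩, ⟨?_, ?_⟩, ⟨?_, ?_⟩, ⟨?_, ?_⟩, ⟨?_, ?_⟩⟩ <;>
    first
      | (rw [fderiv_I2']; simp; try ring)
      | (rw [fderiv_I2c]; simp; try ring)
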